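/- Let f : ℝ^d → ℝ have L₃-Lipschitz third-order derivatives, let α > 0, and let u, v ∈ ℝ^d with u ≠ v satisfy f(u) < f(v) + ∇f(v)ᵀ(u − v) − (α/2)‖u − v‖². Let 0 < η ≤ √(2α/L₃) and suppose ‖u − v‖ ≤ η/2. Set δ = (u − v)/‖u − v‖ and η' = √(η(η + ‖u − v‖)) − ‖u − v‖. Then min{f(v − ηδ), f(u + η'δ)} ≤ max{f(v) − (α/4)η², f(u) − (α/12)η²}. -/

import Mathlib

set_option maxHeartbeats 1000000

open scoped InnerProductSpace

lemma key_step (C : ℝ) (hC : 0 ≤ C) (n : ℕ) (u u' : ℝ → ℝ)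
    (hu : ∀ t, HasDerivAt u (u' t) t) (hc : Continuous u')
    (h0 : u 0 = 0) (hb : ∀ t, |u' t| ≤ C * |t| ^ n) (t : ℝ) :
    |u t| ≤ C * |t| ^ (n + 1) / (n + 1) := by
  have hft : u t = ∫ s in (0:ℝ)..t, u' s := by
    have := intervalIntegral.integral_eq_sub_of_hasDerivAt
      (f := u) (f' := u') (a := 0) (b := t) (fun s _ => hu s)
      (hc.intervalIntegrable _ _)
    rw [this, h0, sub_zero]
  have hmono : |u t| ≤ |∫ s in (0:ℝ)..t, C * |s| ^ n| := by
    rw [hft]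
    exact intervalIntegral.norm_integral_le_abs_of_norm_le (f := u')
      (μ := MeasureTheory.volume) (a := 0) (b := t)
      (Filter.Eventually.of_forall fun s => hb s)
      ((continuous_const.mul ((continuous_abs).pow n)).intervalIntegrable _ _)
  refine hmono.trans (le_of_eq ?_)
  rcases le_total 0 t with h | h
  · have : ∫ s in (0:ℝ)..t, C * |s| ^ n = ∫ s in (0:ℝ)..t, C * s ^ n := by
      apply intervalIntegral.integral_congr
      intro s hs
      rw [Set.uIcc_of_le h] at hs
      simp only [abs_of_nonneg hs.1]
    rw [this, intervalIntegral.integral_const_mul, integral_pow, abs_of_nonneg h,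
      zero_pow (Nat.succ_ne_zero n), sub_zero]
    rw [abs_of_nonneg (by positivity)]
    ring
  · have h1 : ∫ s in (0:ℝ)..t, C * |s| ^ n = ∫ s in (0:ℝ)..t, C * (-s) ^ n := by
      apply intervalIntegral.integral_congr
      intro s hs
      rw [Set.uIcc_of_ge h] at hs
      simp only [abs_of_nonpos hs.2]
    have h2 : (∫ s in (0:ℝ)..t, C * (-s) ^ n) = ∫ s in (-t)..(0:ℝ), C * s ^ n := by
      rw [intervalIntegral.integral_comp_neg (fun s => C * s ^ n)]
      norm_num
    have hnt : (0:ℝ) ≤ -t := neg_nonneg.2 h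
    rw [h1, h2, intervalIntegral.integral_const_mul, integral_pow, abs_of_nonpos h,
      zero_pow (Nat.succ_ne_zero n), zero_sub]
    have hX : (0:ℝ) ≤ (-t) ^ (n+1) := by positivity
    have hden : (0:ℝ) ≤ (n:ℝ) + 1 := by positivity
    rw [abs_of_nonpos (mul_nonpos_of_nonneg_of_nonpos hC
      (div_nonpos_of_nonpos_of_nonneg (by linarith) hden))]
    ring

lemma taylor3 (h : ℝ → ℝ) (hc : ContDiff ℝ 3 h) (L : ℝ) (hL : 0 ≤ L)
    (hlip : ∀ t, |iteratedDeriv 3 h t - iteratedDeriv 3 h 0| ≤ L * |t|) (t : ℝ) :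
    |h t - h 0 - deriv h 0 * t - iteratedDeriv 2 h 0 * t ^ 2 / 2
      - iteratedDeriv 3 h 0 * t ^ 3 / 6| ≤ L * t ^ 4 / 24 := by
  have hc' : ContDiff ℝ ((3:ℕ) : WithTop ℕ∞) h := by exact_mod_cast hc
  set h1 := deriv h with hh1
  set h2 := deriv h1 with hh2
  set h3 := deriv h2 with hh3
  have e2 : iteratedDeriv 2 h = h2 := by
    simp [iteratedDeriv_succ, iteratedDeriv_one, hh2, hh1]
  have e3 : iteratedDeriv 3 h = h3 := by
    simp [iteratedDeriv_succ, iteratedDeriv_one, hh3, hh2, hh1]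
  have hit1 : deriv^[1] h = h1 := by simp [hh1]
  have hit2 : deriv^[2] h = h2 := by
    simp [Function.iterate_succ, hh2, hh1, Function.iterate_one]
  have hc2 : ContDiff ℝ 2 h1 := by
    have := ContDiff.iterate_deriv' 2 1 (f := h) (by exact_mod_cast hc)
    rwa [hit1] at this
  have hc1 : ContDiff ℝ 1 h2 := by
    have := ContDiff.iterate_deriv' 1 2 (f := h) (by exact_mod_cast hc)
    rwa [hit2] at this
  have hd0 : Differentiable ℝ h := hc.differentiable (by norm_num)
  have hd1 : Differentiable ℝ h1 := hc2.differentiable (by norm_num)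
  have hd2 : Differentiable ℝ h2 := hc1.differentiable (by norm_num)
  have hcont3 : Continuous h3 := hc1.continuous_deriv (le_refl 1)
  have hcont2 : Continuous h2 := hd2.continuous
  have hcont1 : Continuous h1 := hd1.continuous

  rw [e2, e3]
  -- level 2
  have H2 : ∀ t, |h2 t - h2 0 - h3 0 * t| ≤ L * |t| ^ 2 / 2 := by
    intro t
    have D : ∀ t, HasDerivAt (fun t => h2 t - h2 0 - h3 0 * t) (h3 t - h3 0) t := by
      intro t
      exact (((hd2 t).hasDerivAt.sub_const (h2 0)).sub
        ((hasDerivAt_id t).const_mul (h3 0))).congr_deriv (by simp [hh3])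
    have B : ∀ t, |h3 t - h3 0| ≤ L * |t| ^ 1 := by
      intro t
      have := hlip t
      rw [e3] at this
      simpa using this
    have := key_step L hL 1 _ _ D (hcont3.sub continuous_const) (by simp) B t
    calc |h2 t - h2 0 - h3 0 * t| ≤ L * |t| ^ (1+1) / ((1:ℕ)+1) := this
      _ = L * |t| ^ 2 / 2 := by norm_num
  -- level 1
  have H1 : ∀ t, |h1 t - h1 0 - h2 0 * t - h3 0 * t ^ 2 / 2| ≤ L * |t| ^ 3 / 6 := by
    intro t
    have D : ∀ t, HasDerivAt (fun t => h1 t - h1 0 - h2 0 * t - h3 0 * t ^ 2 / 2)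
        (h2 t - h2 0 - h3 0 * t) t := by
      intro t
      have d1 : HasDerivAt (fun t => h1 t - h1 0 - h2 0 * t) (h2 t - h2 0) t := by
        exact (((hd1 t).hasDerivAt.sub_const (h1 0)).sub
          ((hasDerivAt_id t).const_mul (h2 0))).congr_deriv (by simp [hh2])
      have d2 : HasDerivAt (fun t : ℝ => h3 0 * t ^ 2 / 2) (h3 0 * t) t := by
        have := (((hasDerivAt_pow 2 t)).const_mul (h3 0)).div_const 2
        refine this.congr_deriv ?_
        push_cast; ring
      exact d1.sub d2
    have B : ∀ t, |h2 t - h2 0 - h3 0 * t| ≤ (L / 2) * |t| ^ 2 := by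
      intro t
      calc |h2 t - h2 0 - h3 0 * t| ≤ L * |t| ^ 2 / 2 := H2 t
        _ = (L / 2) * |t| ^ 2 := by ring
    have := key_step (L / 2) (by linarith) 2 _ _ D
      ((hcont2.sub continuous_const).sub (continuous_const.mul continuous_id)) (by simp) B t
    calc |h1 t - h1 0 - h2 0 * t - h3 0 * t ^ 2 / 2|
        ≤ L / 2 * |t| ^ (2+1) / ((2:ℕ)+1) := this
      _ = L * |t| ^ 3 / 6 := by norm_num; ring
  -- level 0
  have H0 : ∀ t, |h t - h 0 - h1 0 * t - h2 0 * t ^ 2 / 2 - h3 0 * t ^ 3 / 6|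
      ≤ L * |t| ^ 4 / 24 := by
    intro t
    have D : ∀ t, HasDerivAt (fun t => h t - h 0 - h1 0 * t - h2 0 * t ^ 2 / 2
        - h3 0 * t ^ 3 / 6) (h1 t - h1 0 - h2 0 * t - h3 0 * t ^ 2 / 2) t := by
      intro t
      have d1 : HasDerivAt (fun t => h t - h 0 - h1 0 * t) (h1 t - h1 0) t := by
        exact (((hd0 t).hasDerivAt.sub_const (h 0)).sub
          ((hasDerivAt_id t).const_mul (h1 0))).congr_deriv (by simp [hh1])
      have d2 : HasDerivAt (fun t : ℝ => h2 0 * t ^ 2 / 2) (h2 0 * t) t := by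
        have := (((hasDerivAt_pow 2 t)).const_mul (h2 0)).div_const 2
        refine this.congr_deriv ?_
        push_cast; ring
      have d3 : HasDerivAt (fun t : ℝ => h3 0 * t ^ 3 / 6) (h3 0 * t ^ 2 / 2) t := by
        have := (((hasDerivAt_pow 3 t)).const_mul (h3 0)).div_const 6
        refine this.congr_deriv ?_
        push_cast; ring
      exact (d1.sub d2).sub d3
    have B : ∀ t, |h1 t - h1 0 - h2 0 * t - h3 0 * t ^ 2 / 2| ≤ (L / 6) * |t| ^ 3 := by
      intro t
      calc |h1 t - h1 0 - h2 0 * t - h3 0 * t ^ 2 / 2| ≤ L * |t| ^ 3 / 6 := H1 t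
        _ = (L / 6) * |t| ^ 3 := by ring
    have := key_step (L / 6) (by linarith) 3 _ _ D
      (((hcont1.sub continuous_const).sub (continuous_const.mul continuous_id)).sub
        ((continuous_const.mul (continuous_pow 2)).div_const 2)) (by simp) B t
    calc |h t - h 0 - h1 0 * t - h2 0 * t ^ 2 / 2 - h3 0 * t ^ 3 / 6|
        ≤ L / 6 * |t| ^ (3+1) / ((3:ℕ)+1) := this
      _ = L * |t| ^ 4 / 24 := by norm_num; ring
  calc |h t - h 0 - h1 0 * t - h2 0 * t ^ 2 / 2 - h3 0 * t ^ 3 / 6|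
      ≤ L * |t| ^ 4 / 24 := H0 t
    _ = L * t ^ 4 / 24 := by
        rw [show |t| ^ 4 = t ^ 4 from by rw [← abs_pow]; exact abs_of_nonneg (by positivity)]

lemma core_calc (h0 hm hss hrr a b c L α r η s : ℝ) (hL : 0 < L) (hα : 0 < α)
    (hr : 0 < r) (hη : 0 < η) (hLη : L * η ^ 2 ≤ 2 * α) (hrη : r ≤ η / 2)
    (hs2 : s ^ 2 = η * (η + r)) (hsη : η ≤ s)
    (Tm : hm - h0 - a * (-η) ≤ b * η ^ 2 / 2 - c * η ^ 3 / 6 + L * η ^ 4 / 24)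
    (Ts : hss - h0 - a * s ≤ b * s ^ 2 / 2 + c * s ^ 3 / 6 + L * s ^ 4 / 24)
    (Tr : b * r ^ 2 / 2 + c * r ^ 3 / 6 ≤ (hrr - h0 - a * r) + L * r ^ 4 / 24)
    (hpair : hrr < h0 + a * r - α / 2 * r ^ 2) :
    min hm hss ≤ max (h0 - α / 4 * η ^ 2) (hrr - α / 12 * η ^ 2) := by
  have hs0 : 0 < s := lt_of_lt_of_le hη hsη
  have hs3 : s ^ 3 = s * (η * (η + r)) := by
    linear_combination s * hs2
  have hs4 : s ^ 4 = (η * (η + r)) ^ 2 := by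
    rw [show 4 = 2 * 2 from rfl, pow_mul, hs2]
  have hsr : 0 ≤ s - r := by linarith
  have hφr : hrr - h0 - a * r ≤ -(α / 2) * r ^ 2 := by nlinarith
  have hkey : r ^ 2 * ((s - r) * hm + η * hss)
      ≤ r ^ 2 * ((s - r) * (h0 - α / 4 * η ^ 2) + η * (hrr - α / 12 * η ^ 2)) := by
    have m1 : r ^ 2 * (s - r) * (hm - h0 - a * (-η))
        ≤ r ^ 2 * (s - r) * (b * η ^ 2 / 2 - c * η ^ 3 / 6 + L * η ^ 4 / 24) :=
      mul_le_mul_of_nonneg_left Tm (by positivity)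
    have m2 : r ^ 2 * η * (hss - h0 - a * s)
        ≤ r ^ 2 * η * (b * s ^ 2 / 2 + c * s ^ 3 / 6 + L * s ^ 4 / 24) :=
      mul_le_mul_of_nonneg_left Ts (by positivity)
    have idt : r ^ 2 * (s - r) * (b * η ^ 2 / 2 - c * η ^ 3 / 6)
        + r ^ 2 * η * (b * s ^ 2 / 2 + c * s ^ 3 / 6)
        = η ^ 2 * (s + η) * (b * r ^ 2 / 2 + c * r ^ 3 / 6) := by
      linear_combination (b * r ^ 2 * η / 2) * hs2 + (c * r ^ 2 * η / 6) * hs3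
    have m3 : η ^ 2 * (s + η) * (b * r ^ 2 / 2 + c * r ^ 3 / 6)
        ≤ η ^ 2 * (s + η) * ((hrr - h0 - a * r) + L * r ^ 4 / 24) :=
      mul_le_mul_of_nonneg_left Tr (by positivity)
    have m4 : (η ^ 2 * (s + η) - r ^ 2 * η) * (hrr - h0 - a * r)
        ≤ (η ^ 2 * (s + η) - r ^ 2 * η) * (-(α / 2) * r ^ 2) := by
      apply mul_le_mul_of_nonneg_left hφr
      nlinarith
    have m5 : (η ^ 2 * (s + η) - r ^ 2 * η) * (-(α / 2) * r ^ 2)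
        + r ^ 2 * (s - r) * (L * η ^ 4 / 24) + r ^ 2 * η * (L * s ^ 4 / 24)
        + η ^ 2 * (s + η) * (L * r ^ 4 / 24)
        ≤ r ^ 2 * ((s - r) * (-(α / 4) * η ^ 2) + η * (-(α / 12) * η ^ 2)) := by
      have k1 : L * η ^ 2 * (r ^ 2 * (s - r) * η ^ 2) ≤ 2 * α * (r ^ 2 * (s - r) * η ^ 2) :=
        mul_le_mul_of_nonneg_right hLη (by positivity)
      have k2 : L * η ^ 2 * (r ^ 2 * η * (η + r) ^ 2) ≤ 2 * α * (r ^ 2 * η * (η + r) ^ 2) :=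
        mul_le_mul_of_nonneg_right hLη (by positivity)
      have k3 : L * η ^ 2 * ((s + η) * r ^ 4) ≤ 2 * α * ((s + η) * r ^ 4) :=
        mul_le_mul_of_nonneg_right hLη (by positivity)
      have hA : r ^ 2 ≤ η ^ 2 / 4 := by nlinarith
      have hint1 : α * s * r ^ 2 * r ^ 2 ≤ α * s * r ^ 2 * (η ^ 2 / 4) :=
        mul_le_mul_of_nonneg_left hA (by positivity)
      have hint2 : α * η * r ^ 2 * r ^ 2 ≤ α * η * r ^ 2 * (η ^ 2 / 4) :=
        mul_le_mul_of_nonneg_left hA (by positivity)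
      have hint3 : α * η ^ 2 * r ^ 2 * η ≤ α * η ^ 2 * r ^ 2 * s :=
        mul_le_mul_of_nonneg_left hsη (by positivity)
      have n1 : 0 ≤ α * η ^ 2 * r * r ^ 2 := by positivity
      have n2 : 0 ≤ α * η ^ 3 * r ^ 2 := by positivity
      have n3 : 0 ≤ α * η ^ 2 * s * r ^ 2 := by positivity
      rw [hs4]
      linarith [k1, k2, k3, hint1, hint2, hint3, n1, n2, n3]
    linarith [m1, m2, m3, m4, m5, idt]
  have hD : 0 < (s - r) + η := by linarith
  have l1 := min_le_left hm hss
  have l2 := min_le_right hm hss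
  have r1 := le_max_left (h0 - α / 4 * η ^ 2) (hrr - α / 12 * η ^ 2)
  have r2 := le_max_right (h0 - α / 4 * η ^ 2) (hrr - α / 12 * η ^ 2)
  nlinarith [hkey,
    mul_nonneg (mul_nonneg (sq_nonneg r) hsr) (sub_nonneg.2 l1),
    mul_nonneg (mul_nonneg (sq_nonneg r) hη.le) (sub_nonneg.2 l2),
    mul_nonneg (mul_nonneg (sq_nonneg r) hsr) (sub_nonneg.2 r1),
    mul_nonneg (mul_nonneg (sq_nonneg r) hη.le) (sub_nonneg.2 r2),
    mul_pos (mul_pos hr hr) hD]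

/-- Exploiting a non-convexity witness pair under third-order smoothness:
asymmetric steps from u and v decrease the function value. -/
theorem exploit_nc_pair_third_order
    {d : ℕ} (f : EuclideanSpace ℝ (Fin d) → ℝ)
    (L₃ : ℝ) (hL₃ : 0 < L₃)
    (hdiff : ContDiff ℝ 3 f)
    (hlip : ∀ (x₀ δ : EuclideanSpace ℝ (Fin d)), ‖δ‖ = 1 → ∀ θ₁ θ₂ : ℝ,
      |iteratedDeriv 3 (fun θ : ℝ => f (x₀ + θ • δ)) θ₁ -
        iteratedDeriv 3 (fun θ : ℝ => f (x₀ + θ • δ)) θ₂| ≤ L₃ * |θ₁ - θ₂|)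
    (α : ℝ) (hα : 0 < α)
    (u v : EuclideanSpace ℝ (Fin d)) (huv : u ≠ v)
    (hpair : f u < f v + ⟪gradient f v, u - v⟫_ℝ - α / 2 * ‖u - v‖ ^ 2)
    (η : ℝ) (hη0 : 0 < η) (hη : η ≤ Real.sqrt (2 * α / L₃))
    (hdist : ‖u - v‖ ≤ η / 2) :
    min (f (v - η • (‖u - v‖⁻¹ • (u - v))))
        (f (u + (Real.sqrt (η * (η + ‖u - v‖)) - ‖u - v‖) • (‖u - v‖⁻¹ • (u - v))))
      ≤ max (f v - α / 4 * η ^ 2) (f u - α / 12 * η ^ 2) := by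
  have hne : u - v ≠ 0 := sub_ne_zero.2 huv
  set r : ℝ := ‖u - v‖ with hrdef
  have hr : 0 < r := norm_pos_iff.2 hne
  set δ : EuclideanSpace ℝ (Fin d) := r⁻¹ • (u - v) with hδdef
  have hδ : ‖δ‖ = 1 := by
    rw [hδdef, norm_smul, Real.norm_eq_abs, abs_of_pos (inv_pos.2 hr), ← hrdef]
    exact inv_mul_cancel₀ hr.ne'
  set h : ℝ → ℝ := fun θ => f (v + θ • δ) with hhdef
  have hu : u = v + r • δ := by
    rw [hδdef, smul_smul, mul_inv_cancel₀ hr.ne', one_smul]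
    abel
  -- smoothness of h
  have hcurve : ContDiff ℝ 3 (fun θ : ℝ => v + θ • δ) :=
    contDiff_const.add (contDiff_id.smul contDiff_const)
  have hch : ContDiff ℝ 3 h := hdiff.comp hcurve
  -- Lipschitz of third derivative
  have hlip' : ∀ t, |iteratedDeriv 3 h t - iteratedDeriv 3 h 0| ≤ L₃ * |t| := by
    intro t
    have := hlip v δ hδ t 0
    simpa using this
  -- derivative of h at 0 equals the inner product with the gradient
  have hf : HasFDerivAt f (fderiv ℝ f v) v :=
    (hdiff.differentiable (by norm_num) v).hasFDerivAt
  have hcurve0 : HasDerivAt (fun θ : ℝ => v + θ • δ) δ 0 := by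
    simpa using ((hasDerivAt_id (0 : ℝ)).smul_const δ).const_add v
  have hh0 : HasDerivAt h (fderiv ℝ f v δ) 0 := by
    have h₁ : HasFDerivAt f (fderiv ℝ f v) ((fun θ : ℝ => v + θ • δ) 0) := by
      simpa using hf
    exact h₁.comp_hasDerivAt 0 hcurve0
  have hderiv0 : deriv h 0 = fderiv ℝ f v δ := hh0.deriv
  have hgrad : ⟪gradient f v, δ⟫_ℝ = fderiv ℝ f v δ := by
    unfold gradient
    exact InnerProductSpace.toDual_symm_apply
  have hinner : ⟪gradient f v, u - v⟫_ℝ = r * deriv h 0 := by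
    have : u - v = r • δ := by rw [hu]; abel_nf
    rw [this, real_inner_smul_right, hgrad, hderiv0]
  -- function value identifications
  have hfu : f u = h r := by rw [hhdef]; exact congrArg f hu
  have hfv : f v = h 0 := by rw [hhdef]; norm_num
  have hA : f (v - η • δ) = h (-η) := by
    rw [hhdef]
    congr 1
    module
  set s : ℝ := Real.sqrt (η * (η + r)) with hsdef
  have hB : f (u + (s - r) • δ) = h s := by
    rw [hhdef]
    congr 1
    rw [hu]
    module
  -- η² L₃ ≤ 2α
  have hLη : L₃ * η ^ 2 ≤ 2 * α := by
    have h1 : η ^ 2 ≤ 2 * α / L₃ := by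
      have := Real.sq_sqrt (by positivity : (0:ℝ) ≤ 2 * α / L₃)
      nlinarith [hη, hη0, Real.sqrt_nonneg (2 * α / L₃)]
    calc L₃ * η ^ 2 ≤ L₃ * (2 * α / L₃) := by
          exact mul_le_mul_of_nonneg_left h1 hL₃.le
      _ = 2 * α := by field_simp
  -- s properties
  have hs2 : s ^ 2 = η * (η + r) := Real.sq_sqrt (by positivity)
  have hsη : η ≤ s := by
    have h1 : Real.sqrt (η ^ 2) ≤ s := by
      rw [hsdef]; apply Real.sqrt_le_sqrt; nlinarith
    rwa [Real.sqrt_sq hη0.le] at h1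
  -- Taylor bounds
  have T := taylor3 h hch L₃ hL₃.le hlip'
  have Tm : h (-η) - h 0 - deriv h 0 * (-η) ≤ iteratedDeriv 2 h 0 * η ^ 2 / 2
      - iteratedDeriv 3 h 0 * η ^ 3 / 6 + L₃ * η ^ 4 / 24 := by
    have := abs_le.mp (T (-η))
    nlinarith [this.2]
  have Ts : h s - h 0 - deriv h 0 * s ≤ iteratedDeriv 2 h 0 * s ^ 2 / 2
      + iteratedDeriv 3 h 0 * s ^ 3 / 6 + L₃ * s ^ 4 / 24 := by
    have := abs_le.mp (T s)
    nlinarith [this.2]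
  have Tr : iteratedDeriv 2 h 0 * r ^ 2 / 2 + iteratedDeriv 3 h 0 * r ^ 3 / 6
      ≤ (h r - h 0 - deriv h 0 * r) + L₃ * r ^ 4 / 24 := by
    have := abs_le.mp (T r)
    nlinarith [this.1]
  have hpair' : h r < h 0 + deriv h 0 * r - α / 2 * r ^ 2 := by
    rw [← hfu, ← hfv]
    calc f u < f v + ⟪gradient f v, u - v⟫_ℝ - α / 2 * ‖u - v‖ ^ 2 := hpair
      _ = f v + deriv h 0 * r - α / 2 * r ^ 2 := by
          rw [hinner, ← hrdef]; ring
  rw [hA, hB, hfu, hfv]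
  exact core_calc (h 0) (h (-η)) (h s) (h r) (deriv h 0) (iteratedDeriv 2 h 0)
    (iteratedDeriv 3 h 0) L₃ α r η s hL₃ hα hr hη0 hLη hdist hs2 hsη Tm Ts Tr hpair'
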